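/- Let 1 ≤ m ≤ n and ∅ ≠ A ⊆ [m], and let f : 𝔽₂ⁿ → 𝔽₂ be defined by f(x) = 1 if and only if supp(x) is nonempty and supp(x) ⊆ A. Then the codewords of C_f satisfy: wt(c_f(0,0)) = 0; wt(c_f(0,u)) = 2^{n−1} for all u ≠ 0; wt(c_f(1,0)) = 2^{|A|} − 1; and for u ≠ 0, wt(c_f(1,u)) = 2^{n−1} − 1 + 2^{|A|} if supp(u) ∩ A = ∅ and wt(c_f(1,u)) = 2^{n−1} − 1 otherwise. Consequently, among the pairs (1,u) with u ≠ 0, exactly 2^{n−|A|} − 1 give weight 2^{n−1} − 1 + 2^{|A|} and exactly 2ⁿ − 2^{n−|A|} give weight 2^{n−1} − 1. -/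

import Mathlib

open Finset

/-- The order relation of the hierarchical poset `ℍ(m,n)` on `Fin n`:
`i ⪯ j` iff `i = j`, or `i` lies in the bottom level `[m]` and `j` in the top level. -/
def Hle (n m : ℕ) (i j : Fin n) : Prop :=
  i = j ∨ ((i : ℕ) < m ∧ m ≤ (j : ℕ))

instance (n m : ℕ) : DecidableRel (Hle n m) := fun i j =>
  decidable_of_iff (i = j ∨ ((i : ℕ) < m ∧ m ≤ (j : ℕ))) Iff.rfl

/-- Down-closed subsets of the hierarchical poset `ℍ(m,n)`. -/
def HDownClosed (n m : ℕ) (S : Finset (Fin n)) : Prop :=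
  ∀ i j : Fin n, Hle n m i j → j ∈ S → i ∈ S

instance (n m : ℕ) : DecidablePred (HDownClosed n m) := fun S =>
  decidable_of_iff (∀ i j : Fin n, Hle n m i j → j ∈ S → i ∈ S) Iff.rfl

/-- The bottom level `[m]` of `ℍ(m,n)`, viewed inside `Fin n`. -/
def lowSet (n m : ℕ) : Finset (Fin n) :=
  Finset.univ.filter (fun i => (i : ℕ) < m)

/-- The support of a vector of `𝔽₂ⁿ`, as a subset of `[n]`. -/
def supp {n : ℕ} (x : Fin n → ZMod 2) : Finset (Fin n) :=
  Finset.univ.filter (fun i => x i ≠ 0)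

/-- The standard inner product on `𝔽₂ⁿ`. -/
def ip {n : ℕ} (u x : Fin n → ZMod 2) : ZMod 2 := ∑ i, u i * x i

/-- The Hamming weight of the codeword `c_{D,u} = (u·x)_{x ∈ D}`. -/
def wtD {n : ℕ} (D : Finset (Fin n → ZMod 2)) (u : Fin n → ZMod 2) : ℕ :=
  (D.filter (fun x => ip u x = 1)).card

/-- The Hamming weight of the codeword `c_f(s,u) = (s·f(x) + u·x)_{x ∈ 𝔽₂ⁿ ∖ {0}}`. -/
def wtF {n : ℕ} (f : (Fin n → ZMod 2) → ZMod 2) (s : ZMod 2) (u : Fin n → ZMod 2) : ℕ :=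
  (Finset.univ.filter (fun x : Fin n → ZMod 2 => x ≠ 0 ∧ s * f x + ip u x = 1)).card

/-- The Hamming weight of the first `m` coordinates of `u` (the part `v` of `u = (v,w)`). -/
def wtLow (n m : ℕ) (u : Fin n → ZMod 2) : ℕ :=
  (Finset.univ.filter (fun i : Fin n => (i : ℕ) < m ∧ u i ≠ 0)).card

private lemma zmod2_cases : ∀ a : ZMod 2, a = 0 ∨ a = 1 := by decide

private lemma mem_supp {n : ℕ} (x : Fin n → ZMod 2) (i : Fin n) :
    i ∈ supp x ↔ x i ≠ 0 := by simp [supp]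

private lemma supp_inj {n : ℕ} {x y : Fin n → ZMod 2} (h : supp x = supp y) : x = y := by
  funext i
  have h1 : (x i ≠ 0) ↔ (y i ≠ 0) := by rw [← mem_supp, ← mem_supp, h]
  rcases zmod2_cases (x i) with hx | hx <;> rcases zmod2_cases (y i) with hy | hy <;>
    simp [hx, hy] at h1 ⊢

private lemma supp_zero {n : ℕ} : supp (0 : Fin n → ZMod 2) = ∅ := by simp [supp]

private lemma ne_zero_iff_supp {n : ℕ} (x : Fin n → ZMod 2) :
    x ≠ 0 ↔ (supp x).Nonempty := by
  rw [Finset.nonempty_iff_ne_empty]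
  constructor
  · intro hx h; exact hx (supp_inj (h.trans supp_zero.symm))
  · intro h hx; exact h (by rw [hx, supp_zero])

private lemma ip_zero_right {n : ℕ} (u : Fin n → ZMod 2) : ip u 0 = 0 := by simp [ip]

private lemma ip_zero_left {n : ℕ} (x : Fin n → ZMod 2) : ip 0 x = 0 := by simp [ip]

private lemma ip_add {n : ℕ} (u x y : Fin n → ZMod 2) :
    ip u (x + y) = ip u x + ip u y := by
  simp [ip, mul_add, Finset.sum_add_distrib]

private lemma ip_single {n : ℕ} (u : Fin n → ZMod 2) (i : Fin n) :
    ip u (Pi.single i 1) = u i := by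
  rw [ip, Finset.sum_eq_single i]
  · simp
  · intro j _ hj; simp [Pi.single_eq_of_ne hj]
  · simp

private lemma card_supp_subset {n : ℕ} (S : Finset (Fin n)) :
    (univ.filter (fun x : Fin n → ZMod 2 => supp x ⊆ S)).card = 2 ^ S.card := by
  rw [← Finset.card_powerset]
  apply Finset.card_bij (fun x _ => supp x)
  · intro x hx
    simp only [Finset.mem_filter] at hx
    exact Finset.mem_powerset.mpr hx.2
  · intro x hx y hy h; exact supp_inj h
  · intro T hT
    refine ⟨fun i => if i ∈ T then 1 else 0, ?_, ?_⟩
    · simp only [Finset.mem_filter, Finset.mem_univ, true_and]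
      intro i hi
      rw [mem_supp] at hi
      by_cases h : i ∈ T
      · exact Finset.mem_powerset.mp hT h
      · simp [h] at hi
    · ext i
      rw [mem_supp]
      by_cases h : i ∈ T <;> simp [h]

private lemma supp_flip_subset {n : ℕ} (x : Fin n → ZMod 2) (i : Fin n) (S : Finset (Fin n))
    (hi : i ∈ S) (hx : supp x ⊆ S) : supp (x + Pi.single i 1) ⊆ S := by
  intro j hj
  by_cases h : j = i
  · subst h; exact hi
  · apply hx
    rw [mem_supp] at hj ⊢
    simpa [Pi.single_eq_of_ne h] using hj

private lemma flip_flip' {n : ℕ} (x : Fin n → ZMod 2) (i : Fin n) :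
    (x + Pi.single i 1) + Pi.single i 1 = x := by
  have h2 : ∀ a : ZMod 2, a + a = 0 := by decide
  funext j
  simp only [Pi.add_apply]
  rw [add_assoc, h2, add_zero]

private lemma card_ip_split {n : ℕ} (S : Finset (Fin n)) (u : Fin n → ZMod 2) :
    (univ.filter (fun x : Fin n → ZMod 2 => supp x ⊆ S ∧ ip u x = 0)).card +
    (univ.filter (fun x : Fin n → ZMod 2 => supp x ⊆ S ∧ ip u x = 1)).card = 2 ^ S.card := by
  rw [← card_supp_subset S]
  have h0 : (univ.filter (fun x : Fin n → ZMod 2 => supp x ⊆ S ∧ ip u x = 0))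
      = (univ.filter (fun x : Fin n → ZMod 2 => supp x ⊆ S)).filter (fun x => ¬ ip u x = 1) := by
    rw [Finset.filter_filter]
    apply Finset.filter_congr
    intro x _
    have := zmod2_cases (ip u x)
    constructor
    · rintro ⟨h1, h2⟩; exact ⟨h1, by simp [h2]⟩
    · rintro ⟨h1, h2⟩; exact ⟨h1, this.resolve_right h2⟩
  have h1 : (univ.filter (fun x : Fin n → ZMod 2 => supp x ⊆ S ∧ ip u x = 1))
      = (univ.filter (fun x : Fin n → ZMod 2 => supp x ⊆ S)).filter (fun x => ip u x = 1) := by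
    rw [Finset.filter_filter]
  rw [h0, h1, add_comm]
  exact Finset.card_filter_add_card_filter_not _

private lemma card_ip_one {n : ℕ} (S : Finset (Fin n)) (u : Fin n → ZMod 2) (i : Fin n)
    (hi : i ∈ S) (hu : u i ≠ 0) :
    (univ.filter (fun x : Fin n → ZMod 2 => supp x ⊆ S ∧ ip u x = 1)).card = 2 ^ (S.card - 1) := by
  have hui : u i = 1 := (zmod2_cases (u i)).resolve_left hu
  have hflip : ∀ x : Fin n → ZMod 2, ip u (x + Pi.single i 1) = ip u x + 1 := by
    intro x; rw [ip_add, ip_single, hui]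
  have key : (univ.filter (fun x : Fin n → ZMod 2 => supp x ⊆ S ∧ ip u x = 0)).card
           = (univ.filter (fun x : Fin n → ZMod 2 => supp x ⊆ S ∧ ip u x = 1)).card := by
    apply Finset.card_nbij' (fun x => x + Pi.single i 1) (fun x => x + Pi.single i 1)
    · intro x hx
      simp only [Finset.mem_coe, Finset.mem_filter, Finset.mem_univ, true_and] at hx ⊢
      refine ⟨supp_flip_subset x i S hi hx.1, ?_⟩
      rw [hflip, hx.2]; decide
    · intro x hx
      simp only [Finset.mem_coe, Finset.mem_filter, Finset.mem_univ, true_and] at hx ⊢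
      refine ⟨supp_flip_subset x i S hi hx.1, ?_⟩
      rw [hflip, hx.2]; decide
    · intro x _; exact flip_flip' x i
    · intro x _; exact flip_flip' x i
  have hsplit := card_ip_split S u
  have hS1 : 1 ≤ S.card := Finset.card_pos.mpr ⟨i, hi⟩
  have hpow : 2 ^ S.card = 2 * 2 ^ (S.card - 1) := by
    conv_lhs => rw [show S.card = S.card - 1 + 1 by omega]
    rw [pow_succ]; ring
  omega

private lemma filter_ne_zero_card {n : ℕ} (Q : (Fin n → ZMod 2) → Prop) [DecidablePred Q]
    (hQ0 : Q 0) :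
    (univ.filter (fun x : Fin n → ZMod 2 => x ≠ 0 ∧ Q x)).card
      = (univ.filter (fun x : Fin n → ZMod 2 => Q x)).card - 1 := by
  have h : univ.filter (fun x : Fin n → ZMod 2 => x ≠ 0 ∧ Q x)
      = (univ.filter (fun x : Fin n → ZMod 2 => Q x)).erase 0 := by
    ext x; simp [Finset.mem_erase, and_comm]
  rw [h]
  exact Finset.card_erase_of_mem (by simp [hQ0])

private lemma card_filter_split {α : Type*} [Fintype α] [DecidableEq α]
    (p q : α → Prop) [DecidablePred p] [DecidablePred q] :
    (univ.filter (fun x => p x ∧ q x)).card + (univ.filter (fun x => ¬ p x ∧ q x)).card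
      = (univ.filter q).card := by
  have h1 : univ.filter (fun x => p x ∧ q x) = (univ.filter q).filter p := by
    ext x; simp [and_comm]
  have h2 : univ.filter (fun x => ¬ p x ∧ q x) = (univ.filter q).filter (fun x => ¬ p x) := by
    ext x; simp [and_comm]
  rw [h1, h2]
  exact Finset.card_filter_add_card_filter_not _

private lemma card_ip_univ {n : ℕ} (u : Fin n → ZMod 2) (hu : u ≠ 0) :
    (univ.filter (fun x : Fin n → ZMod 2 => ip u x = 1)).card = 2 ^ (n - 1) := by
  obtain ⟨i, hi⟩ := Function.ne_iff.mp hu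
  have h := card_ip_one univ u i (Finset.mem_univ i) (by simpa using hi)
  simp only [Finset.subset_univ, true_and, Finset.card_univ, Fintype.card_fin] at h
  exact h

private lemma ip_zero_of_disj {n : ℕ} (A : Finset (Fin n)) (u x : Fin n → ZMod 2)
    (hd : supp u ∩ A = ∅) (hx : supp x ⊆ A) : ip u x = 0 := by
  rw [ip]
  apply Finset.sum_eq_zero
  intro j _
  rcases zmod2_cases (x j) with h | h
  · rw [h, mul_zero]
  · have hj : j ∈ A := hx (by rw [mem_supp, h]; decide)
    have hu : u j = 0 := by
      by_contra hu
      have hmem : j ∈ supp u ∩ A := Finset.mem_inter.mpr ⟨(mem_supp u j).mpr hu, hj⟩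
      rw [hd] at hmem; exact absurd hmem (Finset.notMem_empty j)
    rw [hu, zero_mul]

private lemma wtF_one_split {n : ℕ} (A : Finset (Fin n))
    (f : (Fin n → ZMod 2) → ZMod 2)
    (hf : ∀ x, f x = 1 ↔ ((supp x).Nonempty ∧ supp x ⊆ A)) (u : Fin n → ZMod 2) :
    wtF f 1 u =
      (univ.filter (fun x : Fin n → ZMod 2 => x ≠ 0 ∧ supp x ⊆ A ∧ ip u x = 0)).card +
      (univ.filter (fun x : Fin n → ZMod 2 => ¬ supp x ⊆ A ∧ ip u x = 1)).card := by
  rw [wtF]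
  have hiff : ∀ x : Fin n → ZMod 2,
      (x ≠ 0 ∧ 1 * f x + ip u x = 1) ↔
      ((x ≠ 0 ∧ supp x ⊆ A ∧ ip u x = 0) ∨ (¬ supp x ⊆ A ∧ ip u x = 1)) := by
    intro x
    rw [one_mul]
    by_cases hx0 : x = 0
    · subst hx0
      constructor
      · rintro ⟨h, -⟩; exact absurd rfl h
      · rintro (⟨h, -⟩ | ⟨h, -⟩)
        · exact absurd rfl h
        · exact absurd (supp_zero ▸ Finset.empty_subset A) h
    · have hne : (supp x).Nonempty := (ne_zero_iff_supp x).mp hx0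
      by_cases hsub : supp x ⊆ A
      · have hfx : f x = 1 := (hf x).mpr ⟨hne, hsub⟩
        have h1 : ∀ a : ZMod 2, (1 : ZMod 2) + a = 1 ↔ a = 0 := by decide
        rw [hfx]
        constructor
        · rintro ⟨-, h⟩; exact Or.inl ⟨hx0, hsub, (h1 _).mp h⟩
        · rintro (⟨-, -, h⟩ | ⟨h, -⟩)
          · exact ⟨hx0, (h1 _).mpr h⟩
          · exact absurd hsub h
      · have hfx : f x = 0 := by
          rcases zmod2_cases (f x) with h | h
          · exact h
          · exact absurd ((hf x).mp h).2 hsub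
        rw [hfx, zero_add]
        constructor
        · rintro ⟨-, h⟩; exact Or.inr ⟨hsub, h⟩
        · rintro (⟨-, h, -⟩ | ⟨-, h⟩)
          · exact absurd h hsub
          · exact ⟨hx0, h⟩
  rw [Finset.filter_congr (fun x _ => hiff x), Finset.filter_or]
  apply Finset.card_union_of_disjoint
  rw [Finset.disjoint_left]
  intro x hx hy
  simp only [Finset.mem_filter] at hx hy
  exact hy.2.1 hx.2.2.1

private lemma inter_empty_iff_subset_compl {n : ℕ} (u : Fin n → ZMod 2) (A : Finset (Fin n)) :
    supp u ∩ A = ∅ ↔ supp u ⊆ Aᶜ := by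
  constructor
  · intro h j hj
    rw [Finset.mem_compl]
    intro hjA
    have hm : j ∈ supp u ∩ A := Finset.mem_inter.mpr ⟨hj, hjA⟩
    rw [h] at hm; exact absurd hm (Finset.notMem_empty j)
  · intro h
    rw [Finset.eq_empty_iff_forall_notMem]
    intro j hj
    rw [Finset.mem_inter] at hj
    exact (Finset.mem_compl.mp (h hj.1)) hj.2

private lemma part4 {n : ℕ} (A : Finset (Fin n)) (hAne : A.Nonempty)
    (f : (Fin n → ZMod 2) → ZMod 2)
    (hf : ∀ x, f x = 1 ↔ ((supp x).Nonempty ∧ supp x ⊆ A))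
    (u : Fin n → ZMod 2) (hu : u ≠ 0) :
    (supp u ∩ A = ∅ → wtF f 1 u = 2 ^ (n - 1) - 1 + 2 ^ A.card) ∧
    (supp u ∩ A ≠ ∅ → wtF f 1 u = 2 ^ (n - 1) - 1) := by
  have ha1 : 1 ≤ A.card := Finset.card_pos.mpr hAne
  have han : A.card ≤ n := by
    have h := Finset.card_le_univ A
    simpa using h
  constructor
  · intro hd
    rw [wtF_one_split A f hf u]
    have e1 : univ.filter (fun x : Fin n → ZMod 2 => x ≠ 0 ∧ (supp x ⊆ A ∧ ip u x = 0))
        = univ.filter (fun x : Fin n → ZMod 2 => x ≠ 0 ∧ supp x ⊆ A) := by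
      apply Finset.filter_congr
      intro x _
      constructor
      · rintro ⟨h1, h2, -⟩; exact ⟨h1, h2⟩
      · rintro ⟨h1, h2⟩; exact ⟨h1, h2, ip_zero_of_disj A u x hd h2⟩
    have e2 : univ.filter (fun x : Fin n → ZMod 2 => ¬ supp x ⊆ A ∧ ip u x = 1)
        = univ.filter (fun x : Fin n → ZMod 2 => ip u x = 1) := by
      apply Finset.filter_congr
      intro x _
      constructor
      · rintro ⟨-, h⟩; exact h
      · intro h
        refine ⟨fun hsub => ?_, h⟩
        rw [ip_zero_of_disj A u x hd hsub] at h
        exact absurd h (by decide)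
    have e3 : (univ.filter (fun x : Fin n → ZMod 2 => x ≠ 0 ∧ supp x ⊆ A)).card
        = (univ.filter (fun x : Fin n → ZMod 2 => supp x ⊆ A)).card - 1 :=
      filter_ne_zero_card _ (by rw [supp_zero]; exact Finset.empty_subset A)
    rw [e1, e2, e3, card_supp_subset, card_ip_univ u hu]
    have h2a : 1 ≤ 2 ^ A.card := Nat.one_le_two_pow
    have h2n : 1 ≤ 2 ^ (n - 1) := Nat.one_le_two_pow
    omega
  · intro hne
    obtain ⟨i, hi⟩ := Finset.nonempty_iff_ne_empty.mpr hne
    rw [Finset.mem_inter, mem_supp] at hi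
    rw [wtF_one_split A f hf u]
    have hc1 : (univ.filter (fun x : Fin n → ZMod 2 => supp x ⊆ A ∧ ip u x = 1)).card
        = 2 ^ (A.card - 1) := card_ip_one A u i hi.2 hi.1
    have hsplitA := card_ip_split A u
    have e1 : (univ.filter (fun x : Fin n → ZMod 2 => x ≠ 0 ∧ (supp x ⊆ A ∧ ip u x = 0))).card
        = (univ.filter (fun x : Fin n → ZMod 2 => supp x ⊆ A ∧ ip u x = 0)).card - 1 :=
      filter_ne_zero_card _ ⟨by rw [supp_zero]; exact Finset.empty_subset A, ip_zero_right u⟩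
    have hsplitU : (univ.filter (fun x : Fin n → ZMod 2 => supp x ⊆ A ∧ ip u x = 1)).card
        + (univ.filter (fun x : Fin n → ZMod 2 => ¬ supp x ⊆ A ∧ ip u x = 1)).card
        = (univ.filter (fun x : Fin n → ZMod 2 => ip u x = 1)).card :=
      card_filter_split (fun x : Fin n → ZMod 2 => supp x ⊆ A) (fun x => ip u x = 1)
    rw [card_ip_univ u hu] at hsplitU
    rw [e1]
    have hpa : 2 ^ A.card = 2 * 2 ^ (A.card - 1) := by
      conv_lhs => rw [show A.card = A.card - 1 + 1 by omega]
      rw [pow_succ]; ring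
    have hle : 2 ^ (A.card - 1) ≤ 2 ^ (n - 1) :=
      Nat.pow_le_pow_right (by norm_num) (by omega)
    have hp1 : 1 ≤ 2 ^ (A.card - 1) := Nat.one_le_two_pow
    have hp2 : 1 ≤ 2 ^ (n - 1) := Nat.one_le_two_pow
    omega


/-- **Theorem 5.5(1).**  Let `∅ ≠ A ⊆ [m]` and let `f` be the indicator of the
nonempty subsets of `A` (the nonempty down-closed subsets of `ℍ(m,n)` contained
in `A`).  Then the weights of the codewords `c_f(s,u)` of `C_f` are: `0` for
`(0,0)`; `2^{n−1}` for `(0,u)`, `u ≠ 0`; `2^{|A|} − 1` for `(1,0)`; and for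
`u ≠ 0`, `2^{n−1} − 1 + 2^{|A|}` if `supp(u) ∩ A = ∅` and `2^{n−1} − 1` otherwise,
with frequencies `2^{n−|A|} − 1` and `2ⁿ − 2^{n−|A|}` respectively. -/
theorem stmt_8 (n m : ℕ) (hm : 1 ≤ m) (hmn : m ≤ n)
    (A : Finset (Fin n)) (hAne : A.Nonempty) (hA : ∀ i ∈ A, (i : ℕ) < m)
    (f : (Fin n → ZMod 2) → ZMod 2)
    (hf : ∀ x, f x = 1 ↔ ((supp x).Nonempty ∧ supp x ⊆ A)) :
    wtF f 0 0 = 0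
    ∧ (∀ u : Fin n → ZMod 2, u ≠ 0 → wtF f 0 u = 2 ^ (n - 1))
    ∧ wtF f 1 0 = 2 ^ A.card - 1
    ∧ (∀ u : Fin n → ZMod 2, u ≠ 0 →
        (supp u ∩ A = ∅ → wtF f 1 u = 2 ^ (n - 1) - 1 + 2 ^ A.card) ∧
        (supp u ∩ A ≠ ∅ → wtF f 1 u = 2 ^ (n - 1) - 1))
    ∧ (Finset.univ.filter (fun u : Fin n → ZMod 2 =>
        u ≠ 0 ∧ wtF f 1 u = 2 ^ (n - 1) - 1 + 2 ^ A.card)).card = 2 ^ (n - A.card) - 1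
    ∧ (Finset.univ.filter (fun u : Fin n → ZMod 2 =>
        u ≠ 0 ∧ wtF f 1 u = 2 ^ (n - 1) - 1)).card = 2 ^ n - 2 ^ (n - A.card) := by

  have ha1 : 1 ≤ A.card := Finset.card_pos.mpr hAne
  have han : A.card ≤ n := by
    have h := Finset.card_le_univ A
    simpa using h
  have hp4 := part4 A hAne f hf
  -- the card of {u ≠ 0 ∧ supp u ∩ A = ∅}
  have hcA : (univ.filter (fun u : Fin n → ZMod 2 => u ≠ 0 ∧ supp u ∩ A = ∅)).card
      = 2 ^ (n - A.card) - 1 := by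
    have e : univ.filter (fun u : Fin n → ZMod 2 => u ≠ 0 ∧ supp u ∩ A = ∅)
        = univ.filter (fun u : Fin n → ZMod 2 => u ≠ 0 ∧ supp u ⊆ Aᶜ) := by
      apply Finset.filter_congr
      intro u _
      rw [inter_empty_iff_subset_compl]
    have e2 : (univ.filter (fun u : Fin n → ZMod 2 => u ≠ 0 ∧ supp u ⊆ Aᶜ)).card
        = (univ.filter (fun u : Fin n → ZMod 2 => supp u ⊆ Aᶜ)).card - 1 :=
      filter_ne_zero_card _ (by rw [supp_zero]; exact Finset.empty_subset _)
    rw [e, e2, card_supp_subset, Finset.card_compl, Fintype.card_fin]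
  have hcard_ne : (univ.filter (fun u : Fin n → ZMod 2 => u ≠ 0)).card = 2 ^ n - 1 := by
    rw [Finset.filter_ne' univ 0, Finset.card_erase_of_mem (Finset.mem_univ 0),
      Finset.card_univ]
    congr 1
    rw [Fintype.card_fun, ZMod.card, Fintype.card_fin]
  have h2a : 1 ≤ 2 ^ A.card := Nat.one_le_two_pow
  refine ⟨?_, ?_, ?_, hp4, ?_, ?_⟩
  · rw [wtF]
    rw [Finset.card_eq_zero, Finset.filter_eq_empty_iff]
    intro x _
    rintro ⟨-, h⟩
    rw [zero_mul, ip_zero_left, add_zero] at h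
    exact absurd h (by decide)
  · intro u hu
    rw [wtF]
    have e : univ.filter (fun x : Fin n → ZMod 2 => x ≠ 0 ∧ 0 * f x + ip u x = 1)
        = univ.filter (fun x : Fin n → ZMod 2 => ip u x = 1) := by
      apply Finset.filter_congr
      intro x _
      rw [zero_mul, zero_add]
      constructor
      · rintro ⟨-, h⟩; exact h
      · intro h
        refine ⟨fun hx0 => ?_, h⟩
        rw [hx0, ip_zero_right] at h
        exact absurd h (by decide)
    rw [e, card_ip_univ u hu]
  · rw [wtF]
    have e : univ.filter (fun x : Fin n → ZMod 2 => x ≠ 0 ∧ 1 * f x + ip 0 x = 1)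
        = univ.filter (fun x : Fin n → ZMod 2 => x ≠ 0 ∧ supp x ⊆ A) := by
      apply Finset.filter_congr
      intro x _
      rw [one_mul, ip_zero_left, add_zero]
      constructor
      · rintro ⟨hx0, h⟩; exact ⟨hx0, ((hf x).mp h).2⟩
      · rintro ⟨hx0, h⟩; exact ⟨hx0, (hf x).mpr ⟨(ne_zero_iff_supp x).mp hx0, h⟩⟩
    have e2 : (univ.filter (fun x : Fin n → ZMod 2 => x ≠ 0 ∧ supp x ⊆ A)).card
        = (univ.filter (fun x : Fin n → ZMod 2 => supp x ⊆ A)).card - 1 :=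
      filter_ne_zero_card _ (by rw [supp_zero]; exact Finset.empty_subset _)
    rw [e, e2, card_supp_subset]
  · have e : univ.filter (fun u : Fin n → ZMod 2 =>
        u ≠ 0 ∧ wtF f 1 u = 2 ^ (n - 1) - 1 + 2 ^ A.card)
        = univ.filter (fun u : Fin n → ZMod 2 => u ≠ 0 ∧ supp u ∩ A = ∅) := by
      apply Finset.filter_congr
      intro u _
      constructor
      · rintro ⟨hu, hw⟩
        refine ⟨hu, ?_⟩
        by_contra hne
        rw [(hp4 u hu).2 hne] at hw
        omega
      · rintro ⟨hu, hd⟩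
        exact ⟨hu, (hp4 u hu).1 hd⟩
    rw [e, hcA]
  · have e : univ.filter (fun u : Fin n → ZMod 2 =>
        u ≠ 0 ∧ wtF f 1 u = 2 ^ (n - 1) - 1)
        = univ.filter (fun u : Fin n → ZMod 2 => u ≠ 0 ∧ ¬ supp u ∩ A = ∅) := by
      apply Finset.filter_congr
      intro u _
      constructor
      · rintro ⟨hu, hw⟩
        refine ⟨hu, fun hd => ?_⟩
        rw [(hp4 u hu).1 hd] at hw
        omega
      · rintro ⟨hu, hd⟩
        exact ⟨hu, (hp4 u hu).2 hd⟩
    have hsplit : (univ.filter (fun u : Fin n → ZMod 2 => supp u ∩ A = ∅ ∧ u ≠ 0)).card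
        + (univ.filter (fun u : Fin n → ZMod 2 => ¬ supp u ∩ A = ∅ ∧ u ≠ 0)).card
        = (univ.filter (fun u : Fin n → ZMod 2 => u ≠ 0)).card :=
      card_filter_split (fun u => supp u ∩ A = ∅) (fun u => u ≠ 0)
    have c1 : univ.filter (fun u : Fin n → ZMod 2 => supp u ∩ A = ∅ ∧ u ≠ 0)
        = univ.filter (fun u : Fin n → ZMod 2 => u ≠ 0 ∧ supp u ∩ A = ∅) := by
      ext x; simp [and_comm]
    have c2 : univ.filter (fun u : Fin n → ZMod 2 => ¬ supp u ∩ A = ∅ ∧ u ≠ 0)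
        = univ.filter (fun u : Fin n → ZMod 2 => u ≠ 0 ∧ ¬ supp u ∩ A = ∅) := by
      ext x; simp [and_comm]
    rw [c1, c2, hcA, hcard_ne] at hsplit
    rw [e]
    have hle : 2 ^ (n - A.card) ≤ 2 ^ n := Nat.pow_le_pow_right (by norm_num) (by omega)
    have hp1 : 1 ≤ 2 ^ (n - A.card) := Nat.one_le_two_pow
    omega
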